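/- Every root class 𝒦 contains all finitely generated torsion-free nilpotent groups, or there exists a prime p such that 𝒦 contains all finite p-groups. -/

import Mathlib

open Pointwise

universe u

/-- A class of groups in universe `u`. -/
abbrev GroupClass : Type (u + 1) := ∀ (G : Type u) [Group G], Prop

/-- A class of groups is invariant under isomorphism. -/
def GroupClass.IsoInvariant (K : GroupClass.{u}) : Prop :=
  ∀ (G H : Type u) [Group G] [Group H], G ≃* H → K G → K H

/-- A class of groups is closed under taking subgroups. -/
def GroupClass.SubgroupClosed (K : GroupClass.{u}) : Prop :=
  ∀ (G : Type u) [Group G], K G → ∀ H : Subgroup G, K H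

/-- A class of groups is closed under binary direct products. -/
def GroupClass.ProdClosed (K : GroupClass.{u}) : Prop :=
  ∀ (A B : Type u) [Group A] [Group B], K A → K B → K (A × B)

/-- `K` is a root class: it is an isomorphism-invariant class of groups containing a
nontrivial group, closed under subgroups and finite direct products, and satisfying the
root condition on subnormal chains `C ⊴ B ⊴ A` of length two. -/
def IsRootClass (K : GroupClass.{u}) : Prop :=
  K.IsoInvariant ∧
  (∃ (G : Type u) (_ : Group G), Nontrivial G ∧ K G) ∧
  K.SubgroupClosed ∧
  K.ProdClosed ∧
  (∀ (A : Type u) [Group A] (B : Subgroup A) [B.Normal] (C : Subgroup B) [C.Normal],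
    K (A ⧸ B) → K ((B : Type u) ⧸ C) →
    ∃ (D : Subgroup A) (hD : D.Normal), D ≤ C.map B.subtype ∧ (letI := hD; K (A ⧸ D)))

/-- A group `G` is `K`-residual: every nonidentity element is excluded from some normal
subgroup with quotient in `K`. -/
def KResidual (K : GroupClass.{u}) (G : Type u) [Group G] : Prop :=
  ∀ g : G, g ≠ 1 → ∃ (N : Subgroup G) (hN : N.Normal),
    (letI := hN; K (G ⧸ N)) ∧ g ∉ N

/-- A subgroup `H` of `A` is `K`-closed: every element of `A` outside `H` avoids the set
`N * H` for some normal subgroup `N` of `A` with `A ⧸ N ∈ K`. -/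
def KClosed (K : GroupClass.{u}) {A : Type u} [Group A] (H : Subgroup A) : Prop :=
  ∀ a : A, a ∉ H → ∃ (N : Subgroup A) (hN : N.Normal),
    (letI := hN; K (A ⧸ N)) ∧ a ∉ (N : Set A) * (H : Set A)

section Helpers

variable {K : GroupClass.{u}}

lemma K_iso (hK : IsRootClass K) {G H : Type u} [Group G] [Group H] (e : G ≃* H) (h : K G) :
    K H := hK.1 G H e h

lemma K_sub (hK : IsRootClass K) {G : Type u} [Group G] (h : K G) (H : Subgroup G) : K H :=
  hK.2.2.1 G h H

lemma K_triv (hK : IsRootClass K) (G : Type u) [Group G] [Subsingleton G] : K G := by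
  obtain ⟨W, _, hnt, hKW⟩ := hK.2.1
  have hbot : K (⊥ : Subgroup W) := K_sub hK hKW ⊥
  refine K_iso hK (?_ : (⊥ : Subgroup W) ≃* G) hbot
  have : Subsingleton (⊥ : Subgroup W) := by infer_instance
  exact { toFun := fun _ => 1, invFun := fun _ => 1,
          left_inv := fun x => Subsingleton.elim _ _,
          right_inv := fun x => Subsingleton.elim _ _,
          map_mul' := fun _ _ => Subsingleton.elim _ _ }

/-- Root classes are closed under extensions. -/
lemma K_ext (hK : IsRootClass K) {A : Type u} [Group A] (B : Subgroup A) [B.Normal]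
    (hQ : K (A ⧸ B)) (hB : K (B : Type u)) : K A := by
  obtain ⟨hiso, -, -, -, hroot⟩ := hK
  have hBC : K ((B : Type u) ⧸ (⊥ : Subgroup B)) :=
    hiso _ _ (QuotientGroup.quotientBot (G := B)).symm hB
  obtain ⟨D, hD, hDle, hKD⟩ := hroot A B (⊥ : Subgroup B) hQ hBC
  have hDbot : D = ⊥ := by
    rw [Subgroup.map_bot] at hDle
    exact le_bot_iff.mp hDle
  subst hDbot
  exact hiso _ _ (QuotientGroup.quotientBot (G := A)) hKD

end Helpers

section PCase

variable {K : GroupClass.{u}}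

lemma K_pGroups_aux (hK : IsRootClass K) {p : ℕ} (hp : p.Prime)
    (C0 : Type u) [Group C0] (hC0card : Nat.card C0 = p) (hC0 : K C0) :
    ∀ (n : ℕ) (G : Type u) [Group G], Finite G → IsPGroup p G → Nat.card G ≤ n → K G := by
  intro n
  induction n with
  | zero =>
    intro G _ hfin _ hcard
    exact absurd hcard (by simpa using Nat.card_pos.ne')
  | succ n ih =>
    intro G _ hfin hpG hcard
    rcases subsingleton_or_nontrivial G with hs | hnt
    · exact K_triv hK G
    · haveI : Fact p.Prime := ⟨hp⟩
      haveI : Nontrivial (Subgroup.center G) := IsPGroup.center_nontrivial hpG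
      have hpZ : IsPGroup p (Subgroup.center G) := hpG.to_subgroup _
      obtain ⟨m, hm⟩ := IsPGroup.iff_card.mp hpZ
      have hm1 : m ≠ 0 := by
        rintro rfl
        simp only [pow_zero] at hm
        exact (Finite.one_lt_card (α := Subgroup.center G)).ne' hm
      have hdvd : p ∣ Nat.card (Subgroup.center G) := by
        rw [hm]; exact dvd_pow_self p hm1
      obtain ⟨c, hc⟩ := exists_prime_orderOf_dvd_card' (G := Subgroup.center G) p hdvd
      -- the cyclic central subgroup of order p
      set C : Subgroup G := Subgroup.zpowers (c : G) with hCdef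
      have hcord : orderOf (c : G) = p := by
        rw [Subgroup.orderOf_coe, hc]
      have hCcard : Nat.card C = p := by
        rw [hCdef, Nat.card_zpowers, hcord]
      haveI : C.Normal := by
        constructor
        intro x hx g
        have hxc : x ∈ Subgroup.center G := by
          have : C ≤ Subgroup.center G := by
            rw [hCdef, Subgroup.zpowers_le]
            exact c.2
          exact this hx
        rw [Subgroup.mem_center_iff] at hxc
        simpa [hxc g] using hx
      -- C ≅ C0
      have hKC : K (C : Type u) := by
        haveI : IsCyclic C := isCyclic_of_prime_card hCcard
        haveI : IsCyclic C0 := isCyclic_of_prime_card hC0card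
        exact K_iso hK (mulEquivOfCyclicCardEq (by rw [hC0card, hCcard])) hC0
      -- quotient is smaller
      have hcardeq : Nat.card (G ⧸ C) * Nat.card C = Nat.card G :=
        (Subgroup.card_eq_card_quotient_mul_card_subgroup C).symm
      have hQle : Nat.card (G ⧸ C) ≤ n := by
        have h2 : 2 ≤ p := hp.two_le
        have hGcard : 2 ≤ Nat.card G := Finite.one_lt_card
        have hQpos : 0 < Nat.card (G ⧸ C) := Nat.card_pos
        rw [hCcard] at hcardeq
        nlinarith
      have hKQ : K (G ⧸ C) := ih (G ⧸ C) inferInstance (hpG.to_quotient C) hQle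
      exact K_ext hK C hKQ hKC

lemma K_pGroups (hK : IsRootClass K) {p : ℕ} (hp : p.Prime)
    (C0 : Type u) [Group C0] (hC0card : Nat.card C0 = p) (hC0 : K C0) :
    ∀ (G : Type u) [Group G], Finite G → IsPGroup p G → K G := fun G _ hfin hpG =>
  K_pGroups_aux hK hp C0 hC0card hC0 (Nat.card G) G hfin hpG le_rfl

end PCase


/-- Old Mathlib notion of a torsion-free monoid. -/
def Monoid.IsTorsionFree (G : Type*) [Monoid G] : Prop :=
  ∀ g : G, g ≠ 1 → ¬IsOfFinOrder g

lemma Monoid.IsTorsionFree.subgroup {G : Type*} [Group G] (htf : Monoid.IsTorsionFree G)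
    (H : Subgroup G) : Monoid.IsTorsionFree H := fun h hne hfin =>
  htf h (by simpa using hne) ((Submonoid.isOfFinOrder_coe (H := H.toSubmonoid) (x := h)).mpr hfin)

section NilpotentMachinery

open Subgroup hiding lowerCentralSeries lowerCentralSeries_succ lowerCentralSeries_zero
  upperCentralSeries upperCentralSeries_zero upperCentralSeries_one
  mem_upperCentralSeries_succ_iff upperCentralSeries_mono upperCentralSeries_nilpotencyClass
  lowerCentralSeries_eq_bot_iff_nilpotencyClass_le nilpotent_iff_lowerCentralSeries
open scoped commutatorElement

variable {G : Type*} [Group G]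

lemma lcs_succ_eq_commutator (n : ℕ) :
    Subgroup.lowerCentralSeries (⊤ : Subgroup G) (n + 1) = ⁅Subgroup.lowerCentralSeries (⊤ : Subgroup G) n, (⊤ : Subgroup G)⁆ := by
  rw [lowerCentralSeries_succ, Subgroup.commutator_def]

lemma lcs_map_surjective {H : Type*} [Group H] (f : G →* H) (hf : Function.Surjective f) :
    ∀ n, (Subgroup.lowerCentralSeries (⊤ : Subgroup G) n).map f = Subgroup.lowerCentralSeries (⊤ : Subgroup H) n := by
  intro n
  induction n with
  | zero =>
    simpa [lowerCentralSeries_zero] using Subgroup.map_top_of_surjective f hf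
  | succ n ih =>
    rw [lcs_succ_eq_commutator, lcs_succ_eq_commutator, Subgroup.map_commutator, ih,
      Subgroup.map_top_of_surjective f hf]

/-- An extension of a finitely generated group by a finitely generated group is
finitely generated. -/
lemma fg_of_normal_of_quotient (N : Subgroup G) [N.Normal] (hN : N.FG)
    (hQ : Group.FG (G ⧸ N)) : Group.FG G := by
  obtain ⟨T, hT, hTfin⟩ := (Subgroup.fg_iff N).mp hN
  obtain ⟨U, hU, hUfin⟩ := Group.fg_iff.mp hQ
  set V : Set G := Quotient.out '' U with hV
  have hVfin : V.Finite := hUfin.image _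
  rw [Group.fg_iff]
  refine ⟨V ∪ T, ?_, hVfin.union hTfin⟩
  have hNle : N ≤ Subgroup.closure (V ∪ T) := by
    rw [← hT]; exact Subgroup.closure_mono Set.subset_union_right
  have hmap : Subgroup.map (QuotientGroup.mk' N) (Subgroup.closure (V ∪ T)) = ⊤ := by
    rw [MonoidHom.map_closure]
    apply top_unique
    rw [← hU]
    apply Subgroup.closure_mono
    intro q hq
    refine ⟨Quotient.out q, Or.inl ⟨q, hq, rfl⟩, ?_⟩
    simpa using QuotientGroup.out_eq' q
  have h1 := congrArg (Subgroup.comap (QuotientGroup.mk' N)) hmap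
  rw [Subgroup.comap_map_eq, QuotientGroup.ker_mk', Subgroup.comap_top,
    sup_of_le_left hNle] at h1
  exact h1

/-- Subgroups of finitely generated abelian groups are finitely generated. -/
lemma comm_subgroup_fg {A : Type*} [Group A] (hcomm : ∀ a b : A, a * b = b * a)
    [hfg : Group.FG A] (B : Subgroup A) : B.FG := by
  letI : CommGroup A := { ‹Group A› with mul_comm := hcomm }
  haveI : Module.Finite ℤ (Additive A) := Module.Finite.iff_addGroup_fg.mpr inferInstance
  have h := IsNoetherian.noetherian (R := ℤ)
    (AddSubgroup.toIntSubmodule (Subgroup.toAddSubgroup B))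
  rw [Submodule.fg_iff_addSubgroup_fg] at h
  rw [Subgroup.fg_iff_add_fg]
  simpa using h

lemma collection_step {S T : Set G} (hSG : Subgroup.closure S = ⊤) {k : ℕ}
    (hTsub : T ⊆ Subgroup.lowerCentralSeries (⊤ : Subgroup G) k)
    (hTgen : Subgroup.lowerCentralSeries (⊤ : Subgroup G) k ≤ Subgroup.closure T ⊔ Subgroup.lowerCentralSeries (⊤ : Subgroup G) (k + 1)) :
    Subgroup.lowerCentralSeries (⊤ : Subgroup G) (k + 1) ≤
      Subgroup.closure {x | ∃ t ∈ T, ∃ s ∈ S, ⁅t, s⁆ = x} ⊔ Subgroup.lowerCentralSeries (⊤ : Subgroup G) (k + 2) := by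
  set M : Subgroup G := Subgroup.lowerCentralSeries (⊤ : Subgroup G) (k + 2) with hM
  set π : G →* G ⧸ M := QuotientGroup.mk' M with hπ
  have hsurj : Function.Surjective π := QuotientGroup.mk'_surjective M
  set cs : Set G := {x | ∃ t ∈ T, ∃ s ∈ S, ⁅t, s⁆ = x} with hcs
  set P : Subgroup (G ⧸ M) := Subgroup.closure (π '' cs) with hP
  -- the image of `γ (k+1)` is central in the quotient
  have hcent : ∀ c : G, c ∈ Subgroup.lowerCentralSeries (⊤ : Subgroup G) (k + 1) → π c ∈ Subgroup.center (G ⧸ M) := by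
    intro c hc
    rw [Subgroup.mem_center_iff]
    intro q
    obtain ⟨y, rfl⟩ := hsurj q
    have hyc : ⁅c, y⁆ ∈ M := by
      rw [hM, lcs_succ_eq_commutator]
      exact Subgroup.commutator_mem_commutator hc (Subgroup.mem_top y)
    have h2 : ⁅π c, π y⁆ = 1 := by
      rw [← map_commutatorElement]
      exact (QuotientGroup.eq_one_iff _).mpr hyc
    exact (commutatorElement_eq_one_iff_commute.mp h2).symm.eq
  have hQtop : Subgroup.closure (π '' S) = ⊤ := by
    rw [← MonoidHom.map_closure, hSG, Subgroup.map_top_of_surjective _ hsurj]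
  -- commutators of images of `γ k` elements with anything are central
  have hcent' : ∀ a : G, a ∈ Subgroup.lowerCentralSeries (⊤ : Subgroup G) k → ∀ b : G ⧸ M,
      ⁅π a, b⁆ ∈ Subgroup.center (G ⧸ M) := by
    intro a ha b
    obtain ⟨y, rfl⟩ := hsurj b
    rw [← map_commutatorElement]
    apply hcent
    rw [lcs_succ_eq_commutator]
    exact Subgroup.commutator_mem_commutator ha (Subgroup.mem_top y)
  -- base : t ∈ T
  have hbase : ∀ t ∈ T, ∀ b : G ⧸ M, ⁅π t, b⁆ ∈ P := by
    intro t ht b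
    have hb : b ∈ Subgroup.closure (π '' S) := by rw [hQtop]; trivial
    induction hb using Subgroup.closure_induction with
    | mem x hx =>
      obtain ⟨s, hs, rfl⟩ := hx
      rw [← map_commutatorElement]
      exact Subgroup.subset_closure ⟨⁅t, s⁆, ⟨t, ht, s, hs, rfl⟩, rfl⟩
    | one =>
      simpa using P.one_mem
    | mul x y hxm hym hx hy =>
      have hcy : ⁅π t, y⁆ ∈ Subgroup.center (G ⧸ M) := hcent' t (hTsub ht) y
      have hid : ⁅π t, x * y⁆ = ⁅π t, x⁆ * (x * ⁅π t, y⁆ * x⁻¹) := by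
        simp only [commutatorElement_def]; group
      have hxc : x * ⁅π t, y⁆ * x⁻¹ = ⁅π t, y⁆ := by
        rw [Subgroup.mem_center_iff.mp hcy x, mul_inv_cancel_right]
      rw [hid, hxc]
      exact mul_mem hx hy
    | inv x hxm hx =>
      have hcx : ⁅π t, x⁆ ∈ Subgroup.center (G ⧸ M) := hcent' t (hTsub ht) x
      have hid : ⁅π t, x⁻¹⁆ = x⁻¹ * ⁅π t, x⁆⁻¹ * x := by
        simp only [commutatorElement_def]; group
      have hxc : x⁻¹ * ⁅π t, x⁆⁻¹ * x = ⁅π t, x⁆⁻¹ := by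
        rw [Subgroup.mem_center_iff.mp ((Subgroup.center (G ⧸ M)).inv_mem hcx) x⁻¹,
          inv_mul_cancel_right]
      rw [hid, hxc]
      exact inv_mem hx
  have hTle : Subgroup.closure (π '' T) ≤ Subgroup.map π (Subgroup.lowerCentralSeries (⊤ : Subgroup G) k) := by
    rw [Subgroup.closure_le]
    rintro _ ⟨t, ht, rfl⟩
    exact Subgroup.mem_map_of_mem π (hTsub ht)
  -- commutators of elements of `closure (π '' T)` with anything are central
  have hcent2 : ∀ u ∈ Subgroup.closure (π '' T), ∀ b : G ⧸ M,
      ⁅u, b⁆ ∈ Subgroup.center (G ⧸ M) := by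
    intro u hu b
    obtain ⟨a, ha, rfl⟩ := hTle hu
    exact hcent' a ha b
  -- outer induction
  have houter : ∀ u ∈ Subgroup.closure (π '' T), ∀ b : G ⧸ M, ⁅u, b⁆ ∈ P := by
    intro u hu
    induction hu using Subgroup.closure_induction with
    | mem x hx =>
      obtain ⟨t, ht, rfl⟩ := hx
      exact hbase t ht
    | one =>
      intro b
      simpa using P.one_mem
    | mul x y hxm hym hx hy =>
      intro b
      have hcy : ⁅y, b⁆ ∈ Subgroup.center (G ⧸ M) := hcent2 y hym b
      have hid : ⁅x * y, b⁆ = (x * ⁅y, b⁆ * x⁻¹) * ⁅x, b⁆ := by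
        simp only [commutatorElement_def]; group
      have hxc : x * ⁅y, b⁆ * x⁻¹ = ⁅y, b⁆ := by
        rw [Subgroup.mem_center_iff.mp hcy x, mul_inv_cancel_right]
      rw [hid, hxc]
      exact mul_mem (hy b) (hx b)
    | inv x hxm hx =>
      intro b
      have hcx : ⁅x, b⁆ ∈ Subgroup.center (G ⧸ M) := hcent2 x hxm b
      have hid : ⁅x⁻¹, b⁆ = x⁻¹ * ⁅x, b⁆⁻¹ * x := by
        simp only [commutatorElement_def]; group
      have hxc : x⁻¹ * ⁅x, b⁆⁻¹ * x = ⁅x, b⁆⁻¹ := by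
        rw [Subgroup.mem_center_iff.mp ((Subgroup.center (G ⧸ M)).inv_mem hcx) x⁻¹,
          inv_mul_cancel_right]
      rw [hid, hxc]
      exact inv_mem (hx b)
  -- conclude
  have hcentle : Subgroup.map π (Subgroup.lowerCentralSeries (⊤ : Subgroup G) (k + 1)) ≤ Subgroup.center (G ⧸ M) := by
    rintro _ ⟨c, hc, rfl⟩
    exact hcent c hc
  haveI hnorm : (Subgroup.map π (Subgroup.lowerCentralSeries (⊤ : Subgroup G) (k + 1))).Normal := by
    constructor
    intro m hm g
    have : g * m * g⁻¹ = m := by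
      rw [Subgroup.mem_center_iff.mp (hcentle hm) g, mul_inv_cancel_right]
    rwa [this]
  have hfinal : Subgroup.lowerCentralSeries (⊤ : Subgroup G) (k + 1) ≤ Subgroup.comap π P := by
    rw [lcs_succ_eq_commutator, Subgroup.commutator_le]
    intro a ha b _
    have hπa : π a ∈ Subgroup.closure (π '' T) ⊔ Subgroup.map π (Subgroup.lowerCentralSeries (⊤ : Subgroup G) (k + 1)) := by
      have h2 : π a ∈ Subgroup.map π (Subgroup.closure T ⊔ Subgroup.lowerCentralSeries (⊤ : Subgroup G) (k + 1)) :=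
        Subgroup.mem_map_of_mem π (hTgen ha)
      rwa [Subgroup.map_sup, MonoidHom.map_closure] at h2
    have hπa' : (π a : G ⧸ M) ∈ (Subgroup.closure (π '' T) : Set (G ⧸ M)) *
        (Subgroup.map π (Subgroup.lowerCentralSeries (⊤ : Subgroup G) (k + 1)) : Set (G ⧸ M)) := by
      rw [← Subgroup.mul_normal]; exact hπa
    obtain ⟨u, hu, v, hv, huv⟩ := hπa'
    rw [Subgroup.mem_comap, map_commutatorElement]
    have hv' : v ∈ Subgroup.center (G ⧸ M) := hcentle hv
    have hvb : v * π b * v⁻¹ = π b := by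
      rw [← Subgroup.mem_center_iff.mp hv' (π b), mul_inv_cancel_right]
    have heq : ⁅π a, π b⁆ = ⁅u, π b⁆ := by
      rw [← huv]
      have hid : ⁅u * v, π b⁆ = u * (v * π b * v⁻¹) * u⁻¹ * (π b)⁻¹ := by
        simp only [commutatorElement_def]; group
      rw [hid, hvb]
      simp only [commutatorElement_def]
    rw [heq]
    exact houter u hu (π b)
  have hcomap : Subgroup.comap π P = Subgroup.closure cs ⊔ M := by
    have hPmap : P = Subgroup.map π (Subgroup.closure cs) := by
      rw [MonoidHom.map_closure]
    rw [hPmap, Subgroup.comap_map_eq, QuotientGroup.ker_mk']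
  rw [hcomap] at hfinal
  exact hfinal

lemma exists_gen_mod {S : Set G} (hSfin : S.Finite) (hSG : Subgroup.closure S = ⊤) :
    ∀ k, ∃ T : Set G, T.Finite ∧ T ⊆ Subgroup.lowerCentralSeries (⊤ : Subgroup G) k ∧
      Subgroup.lowerCentralSeries (⊤ : Subgroup G) k ≤ Subgroup.closure T ⊔ Subgroup.lowerCentralSeries (⊤ : Subgroup G) (k + 1) := by
  intro k
  induction k with
  | zero =>
    refine ⟨S, hSfin, by simp [lowerCentralSeries_zero], ?_⟩
    rw [hSG]
    exact le_sup_left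
  | succ k ih =>
    obtain ⟨T, hTfin, hTsub, hTgen⟩ := ih
    refine ⟨{x | ∃ t ∈ T, ∃ s ∈ S, ⁅t, s⁆ = x}, ?_, ?_, collection_step hSG hTsub hTgen⟩
    · have himg : {x | ∃ t ∈ T, ∃ s ∈ S, ⁅t, s⁆ = x} =
          Set.image2 (fun t s => ⁅t, s⁆) T S := by
        ext x
        simp [Set.mem_image2]
      rw [himg]
      exact hTfin.image2 _ hSfin
    · rintro x ⟨t, ht, s, hs, rfl⟩
      rw [lcs_succ_eq_commutator]
      exact Subgroup.commutator_mem_commutator (hTsub ht) (Subgroup.mem_top s)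

lemma lcs_fg (hfg : Group.FG G) (k : ℕ) (hbot : Subgroup.lowerCentralSeries (⊤ : Subgroup G) (k + 1) = ⊥) :
    (Subgroup.lowerCentralSeries (⊤ : Subgroup G) k).FG := by
  obtain ⟨S, hSG, hSfin⟩ := Group.fg_iff.mp hfg
  obtain ⟨T, hTfin, hTsub, hTgen⟩ := exists_gen_mod hSfin hSG k
  rw [Subgroup.fg_iff]
  refine ⟨T, le_antisymm ((Subgroup.closure_le _).mpr hTsub) ?_, hTfin⟩
  intro x hx
  have := hTgen hx
  rwa [hbot, sup_bot_eq] at this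

/-- Mal'cev: subgroups of finitely generated nilpotent groups are finitely generated. -/
lemma nilpotent_subgroups_fg :
    ∀ (n : ℕ) (G : Type*) [Group G], Group.FG G → ∀ (_ : Group.IsNilpotent G),
      Group.nilpotencyClass G ≤ n → ∀ H : Subgroup G, H.FG := by
  intro n
  induction n with
  | zero =>
    intro G _ hfg hnil hc H
    haveI := hnil
    have hsub : Subsingleton G :=
      nilpotencyClass_zero_iff_subsingleton.mp (Nat.le_zero.mp hc)
    haveI : Finite G := Finite.of_subsingleton
    exact (Group.fg_iff_subgroup_fg H).mp inferInstance
  | succ n ih =>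
    intro G _ hfg hnil hc H
    haveI := hnil
    haveI := hfg
    set W := Subgroup.lowerCentralSeries (⊤ : Subgroup G) n with hW
    have hWbot : Subgroup.lowerCentralSeries (⊤ : Subgroup G) (n + 1) = ⊥ :=
      lowerCentralSeries_eq_bot_iff_nilpotencyClass_le.mpr hc
    have hWfg : W.FG := lcs_fg hfg n hWbot
    have hWcent : W ≤ Subgroup.center G := by
      intro w hw
      rw [Subgroup.mem_center_iff]
      intro g
      have hcomm : ⁅w, g⁆ ∈ Subgroup.lowerCentralSeries (⊤ : Subgroup G) (n + 1) := by
        rw [lcs_succ_eq_commutator]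
        exact Subgroup.commutator_mem_commutator hw (Subgroup.mem_top g)
      rw [hWbot, Subgroup.mem_bot] at hcomm
      exact (commutatorElement_eq_one_iff_commute.mp hcomm).symm.eq
    haveI : W.Normal := lowerCentralSeries_normal ⊤ n
    -- the quotient has smaller nilpotency class
    have hmapW : Subgroup.map (QuotientGroup.mk' W) W = ⊥ := by
      rw [eq_bot_iff]
      rintro _ ⟨w, hw, rfl⟩
      rw [Subgroup.mem_bot]
      exact (QuotientGroup.eq_one_iff _).mpr hw
    have hQlcs : Subgroup.lowerCentralSeries (⊤ : Subgroup (G ⧸ W)) n = ⊥ := by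
      rw [← lcs_map_surjective (QuotientGroup.mk' W) (QuotientGroup.mk'_surjective W) n, ← hW,
        hmapW]
    haveI hQnil : Group.IsNilpotent (G ⧸ W) :=
      nilpotent_iff_lowerCentralSeries.mpr ⟨n, hQlcs⟩
    have hQclass : Group.nilpotencyClass (G ⧸ W) ≤ n :=
      lowerCentralSeries_eq_bot_iff_nilpotencyClass_le.mp hQlcs
    have hHQ : (H.map (QuotientGroup.mk' W)).FG :=
      ih (G ⧸ W) inferInstance hQnil hQclass _
    -- W is a finitely generated abelian group
    have hcommW : ∀ a b : W, a * b = b * a := fun a b =>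
      Subtype.ext ((Subgroup.mem_center_iff.mp (hWcent a.2) (b : G)).symm)
    haveI : Group.FG W := (Group.fg_iff_subgroup_fg W).mpr hWfg
    -- H ⊓ W is finitely generated
    have hHW : (H ⊓ W).FG := by
      have h1 : ((H ⊓ W).subgroupOf W).FG := comm_subgroup_fg hcommW ((H ⊓ W).subgroupOf W)
      have e : ((H ⊓ W).subgroupOf W) ≃* ↥(H ⊓ W) := Subgroup.subgroupOfEquivOfLe inf_le_right
      haveI : Group.FG ((H ⊓ W).subgroupOf W) := (Group.fg_iff_subgroup_fg _).mpr h1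
      have h2 : Group.FG ↥(H ⊓ W) :=
        Group.fg_of_surjective (f := e.toMonoidHom) e.surjective
      exact (Group.fg_iff_subgroup_fg _).mp h2
    -- assemble
    set φ : H →* G ⧸ W := (QuotientGroup.mk' W).comp H.subtype with hφ
    have hker : φ.ker = (H ⊓ W).subgroupOf H := by
      ext x
      simp only [hφ, MonoidHom.mem_ker, MonoidHom.comp_apply, Subgroup.mem_subgroupOf,
        Subgroup.mem_inf]
      rw [QuotientGroup.mk'_apply, QuotientGroup.eq_one_iff]
      simp [x.2]
    have hkerfg : φ.ker.FG := by
      rw [hker]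
      have e : ((H ⊓ W).subgroupOf H) ≃* ↥(H ⊓ W) := Subgroup.subgroupOfEquivOfLe inf_le_left
      haveI h2 : Group.FG ↥(H ⊓ W) := (Group.fg_iff_subgroup_fg _).mpr hHW
      haveI : Group.FG ((H ⊓ W).subgroupOf H) :=
        Group.fg_of_surjective (f := e.symm.toMonoidHom) e.symm.surjective
      exact (Group.fg_iff_subgroup_fg _).mp inferInstance
    have hrange : φ.range = H.map (QuotientGroup.mk' W) := by
      ext q
      simp only [hφ, MonoidHom.mem_range, MonoidHom.comp_apply, Subgroup.mem_map]
      constructor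
      · rintro ⟨⟨x, hx⟩, rfl⟩; exact ⟨x, hx, rfl⟩
      · rintro ⟨x, hx, rfl⟩; exact ⟨⟨x, hx⟩, rfl⟩
    have hQfg2 : Group.FG (↥H ⧸ φ.ker) := by
      have e2 := QuotientGroup.quotientKerEquivRange φ
      haveI : Group.FG φ.range := by
        rw [hrange]; exact (Group.fg_iff_subgroup_fg _).mpr hHQ
      exact Group.fg_of_surjective (f := e2.symm.toMonoidHom) e2.symm.surjective
    have : Group.FG H := fg_of_normal_of_quotient φ.ker hkerfg hQfg2
    exact (Group.fg_iff_subgroup_fg H).mp this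

lemma conj_pow_of_central_comm {Q : Type*} [Group Q] (u v : Q)
    (hc : ⁅u, v⁆ ∈ Subgroup.center Q) : ∀ n : ℕ, ⁅u ^ n, v⁆ = ⁅u, v⁆ ^ n := by
  intro n
  induction n with
  | zero => simp
  | succ n ih =>
    have hcu : Commute u (⁅u, v⁆ ^ n) :=
      (Commute.symm ((Subgroup.mem_center_iff.mp hc u) : u * ⁅u, v⁆ = ⁅u, v⁆ * u) :
        Commute ⁅u, v⁆ u).symm.pow_right n
    have h1 : u ^ n * v * (u ^ n)⁻¹ = ⁅u, v⁆ ^ n * v := by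
      have h0 := ih
      rw [commutatorElement_def] at h0
      calc u ^ n * v * (u ^ n)⁻¹ = u ^ n * v * (u ^ n)⁻¹ * v⁻¹ * v := by group
        _ = ⁅u, v⁆ ^ n * v := by rw [h0]
    calc ⁅u ^ (n + 1), v⁆ = u * (u ^ n * v * (u ^ n)⁻¹) * u⁻¹ * v⁻¹ := by
          rw [commutatorElement_def, pow_succ']; group
      _ = u * (⁅u, v⁆ ^ n * v) * u⁻¹ * v⁻¹ := by rw [h1]
      _ = ⁅u, v⁆ ^ n * (u * v * u⁻¹ * v⁻¹) := by
          rw [← mul_assoc, hcu.eq]; group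
      _ = ⁅u, v⁆ ^ (n + 1) := by
          rw [pow_succ, commutatorElement_def]

lemma ucs_isolated (htf : Monoid.IsTorsionFree G) :
    ∀ i : ℕ, ∀ x : G, ∀ n : ℕ, 0 < n →
      x ∈ Subgroup.upperCentralSeries G (i + 1) → x ^ n ∈ Subgroup.upperCentralSeries G i →
      x ∈ Subgroup.upperCentralSeries G i := by
  intro i
  induction i with
  | zero =>
    intro x n hn _ hxn
    rw [upperCentralSeries_zero, Subgroup.mem_bot] at hxn ⊢
    by_contra hx
    exact htf x hx (isOfFinOrder_iff_pow_eq_one.mpr ⟨n, hn, hxn⟩)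
  | succ i ih =>
    intro x n hn hx2 hxn
    rw [mem_upperCentralSeries_succ_iff]
    intro y
    have hc1 : x * y * x⁻¹ * y⁻¹ ∈ Subgroup.upperCentralSeries G (i + 1) :=
      mem_upperCentralSeries_succ_iff.mp hx2 y
    apply ih (x * y * x⁻¹ * y⁻¹) n hn hc1
    -- show (x y x⁻¹ y⁻¹)^n ∈ ucs i
    set M := Subgroup.upperCentralSeries G i with hMdef
    haveI : M.Normal := inferInstance
    set π : G →* G ⧸ M := QuotientGroup.mk' M with hπ
    have hsurj : Function.Surjective π := QuotientGroup.mk'_surjective M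
    have hccen : ⁅π x, π y⁆ ∈ Subgroup.center (G ⧸ M) := by
      rw [← map_commutatorElement, Subgroup.mem_center_iff]
      intro q
      obtain ⟨z, rfl⟩ := hsurj q
      have hcz : ⁅x, y⁆ * z * ⁅x, y⁆⁻¹ * z⁻¹ ∈ M := by
        have := mem_upperCentralSeries_succ_iff.mp hc1 z
        simpa [commutatorElement_def] using this
      have h2 : ⁅π ⁅x, y⁆, π z⁆ = 1 := by
        rw [← map_commutatorElement]
        apply (QuotientGroup.eq_one_iff _).mpr
        simpa [commutatorElement_def] using hcz
      exact (commutatorElement_eq_one_iff_commute.mp h2).symm.eq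
    have hp := conj_pow_of_central_comm (π x) (π y) hccen n
    have hxny : ⁅x ^ n, y⁆ ∈ M := by
      have := mem_upperCentralSeries_succ_iff.mp hxn y
      simpa [commutatorElement_def] using this
    have h2 : ⁅π x, π y⁆ ^ n = 1 := by
      rw [← hp, ← map_pow, ← map_commutatorElement]
      exact (QuotientGroup.eq_one_iff _).mpr hxny
    have h3 : π ((x * y * x⁻¹ * y⁻¹) ^ n) = 1 := by
      rw [map_pow]
      have : π (x * y * x⁻¹ * y⁻¹) = ⁅π x, π y⁆ := by
        rw [← map_commutatorElement]; rfl
      rw [this]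
      exact h2
    exact (QuotientGroup.eq_one_iff _).mp h3

lemma pow_mem_center_imp (hnil : Group.IsNilpotent G) (htf : Monoid.IsTorsionFree G)
    {x : G} {n : ℕ} (hn : 0 < n) (hxn : x ^ n ∈ Subgroup.center G) :
    x ∈ Subgroup.center G := by
  haveI := hnil
  have key : ∀ j, x ∈ Subgroup.upperCentralSeries G (j + 1) → x ∈ Subgroup.upperCentralSeries G 1 := by
    intro j
    induction j with
    | zero => exact id
    | succ j ih =>
      intro hx
      apply ih
      apply ucs_isolated htf (j + 1) x n hn hx
      have h1 : x ^ n ∈ Subgroup.upperCentralSeries G 1 := by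
        rw [upperCentralSeries_one]; exact hxn
      exact upperCentralSeries_mono G (by omega) h1
  rw [← upperCentralSeries_one]
  have hx_top : x ∈ Subgroup.upperCentralSeries G (Group.nilpotencyClass G) := by
    rw [upperCentralSeries_nilpotencyClass]; trivial
  rcases Nat.eq_zero_or_pos (Group.nilpotencyClass G) with h0 | hpos
  · haveI : Subsingleton G := nilpotencyClass_zero_iff_subsingleton.mp h0
    have : x = 1 := Subsingleton.elim x 1
    rw [this]
    exact Subgroup.one_mem _
  · obtain ⟨m, hm⟩ := Nat.exists_eq_add_of_lt hpos
    apply key m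
    rw [hm, zero_add] at hx_top
    exact hx_top

lemma quotient_center_torsionFree (hnil : Group.IsNilpotent G)
    (htf : Monoid.IsTorsionFree G) :
    Monoid.IsTorsionFree (G ⧸ Subgroup.center G) := by
  intro q hq hfin
  obtain ⟨x, rfl⟩ := QuotientGroup.mk'_surjective _ q
  obtain ⟨n, hn, hxn⟩ := isOfFinOrder_iff_pow_eq_one.mp hfin
  have hx : x ^ n ∈ Subgroup.center G := by
    rw [← QuotientGroup.eq_one_iff]
    rw [← map_pow] at hxn
    exact hxn
  exact hq ((QuotientGroup.eq_one_iff _).mpr (pow_mem_center_imp hnil htf hn hx))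

end NilpotentMachinery

section Nilpotent

variable {K : GroupClass.{u}}

lemma K_zn (hK : IsRootClass K) (hZ : K (ULift.{u} (Multiplicative ℤ))) :
    ∀ n : ℕ, K (ULift.{u} (Multiplicative (Fin n → ℤ))) := by
  intro n
  induction n with
  | zero =>
    haveI : Subsingleton (ULift.{u} (Multiplicative (Fin 0 → ℤ))) := by
      constructor
      intro a b
      cases a; cases b
      congr 1
      exact Subsingleton.elim _ _
    exact K_triv hK _
  | succ n ih =>
    have hprod := hK.2.2.2.1 _ _ hZ ih
    have e1 : ULift.{u} (Multiplicative ℤ) × ULift.{u} (Multiplicative (Fin n → ℤ)) ≃*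
        Multiplicative ℤ × Multiplicative (Fin n → ℤ) :=
      MulEquiv.prodCongr MulEquiv.ulift MulEquiv.ulift
    have e2 : Multiplicative ℤ × Multiplicative (Fin n → ℤ) ≃*
        Multiplicative (ℤ × (Fin n → ℤ)) := (MulEquiv.prodMultiplicative (G := ℤ) (H := Fin n → ℤ)).symm
    have aeq0 : (Fin (n + 1) → ℤ) ≃+ ℤ × (Fin n → ℤ) :=
      { (Fin.consEquiv fun _ => ℤ).symm with map_add' := fun x y => rfl }
    have e3 : Multiplicative (ℤ × (Fin n → ℤ)) ≃* Multiplicative (Fin (n + 1) → ℤ) :=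
      AddEquiv.toMultiplicative aeq0.symm
    have e4 : Multiplicative (Fin (n + 1) → ℤ) ≃* ULift.{u} (Multiplicative (Fin (n + 1) → ℤ)) :=
      MulEquiv.ulift.symm
    exact K_iso hK (((e1.trans e2).trans e3).trans e4) hprod

lemma K_comm (hK : IsRootClass K) (hZ : K (ULift.{u} (Multiplicative ℤ)))
    (A : Type u) [Group A] (hcomm : ∀ a b : A, a * b = b * a)
    (hfg : Group.FG A) (htf : Monoid.IsTorsionFree A) : K A := by
  letI : CommGroup A := { ‹Group A› with mul_comm := hcomm }
  haveI := hfg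
  haveI : Module.Finite ℤ (Additive A) := Module.Finite.iff_addGroup_fg.mpr inferInstance
  haveI : IsMulTorsionFree A := isMulTorsionFree_iff_not_isOfFinOrder.mpr htf
  haveI : Module.Free ℤ (Additive A) := Module.free_of_finite_type_torsion_free'
  let ι := Module.Free.ChooseBasisIndex ℤ (Additive A)
  let b : Module.Basis ι ℤ (Additive A) := Module.Free.chooseBasis ℤ (Additive A)
  let n := Fintype.card ι
  let b' : Module.Basis (Fin n) ℤ (Additive A) := b.reindex (Fintype.equivFin ι)
  let aeq : Additive A ≃+ (Fin n → ℤ) := b'.equivFun.toAddEquiv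
  have e : A ≃* Multiplicative (Fin n → ℤ) :=
    (MulEquiv.multiplicativeAdditive A).symm.trans (AddEquiv.toMultiplicative aeq)
  exact K_iso hK ((e.trans MulEquiv.ulift.symm).symm) (K_zn hK hZ n)

lemma K_nilpotent_aux (hK : IsRootClass K) (hZ : K (ULift.{u} (Multiplicative ℤ))) :
    ∀ (n : ℕ) (G : Type u) [Group G], Group.FG G → Monoid.IsTorsionFree G →
      ∀ (_ : Group.IsNilpotent G), Group.nilpotencyClass G ≤ n → K G := by
  intro n
  induction n with
  | zero =>
    intro G _ _ _ hnil hc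
    haveI := hnil
    haveI : Subsingleton G := nilpotencyClass_zero_iff_subsingleton.mp (Nat.le_zero.mp hc)
    exact K_triv hK G
  | succ n ih =>
    intro G _ hfg htf hnil hc
    haveI := hnil
    haveI := hfg
    have hQtf : Monoid.IsTorsionFree (G ⧸ Subgroup.center G) :=
      quotient_center_torsionFree hnil htf
    haveI hQnil : Group.IsNilpotent (G ⧸ Subgroup.center G) :=
      nilpotent_of_surjective (QuotientGroup.mk' (Subgroup.center G))
        (QuotientGroup.mk'_surjective (Subgroup.center G))
    have hQc : Group.nilpotencyClass (G ⧸ Subgroup.center G) ≤ n := by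
      have h := nilpotencyClass_quotient_center (G := G)
      omega
    have hQK : K (G ⧸ Subgroup.center G) := ih (G ⧸ Subgroup.center G) inferInstance hQtf hQnil hQc
    have hZfg : (Subgroup.center G).FG :=
      nilpotent_subgroups_fg (Group.nilpotencyClass G) G hfg hnil le_rfl (Subgroup.center G)
    have hZK : K (Subgroup.center G) := by
      refine K_comm hK hZ (Subgroup.center G) (fun a b => Subtype.ext ?_)
        ((Group.fg_iff_subgroup_fg (Subgroup.center G)).mpr hZfg)
        (htf.subgroup (Subgroup.center G))
      exact (Subgroup.mem_center_iff.mp a.2 (b : G)).symm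
    exact K_ext hK (Subgroup.center G) hQK hZK

lemma K_nilpotent (hK : IsRootClass K) (hZ : K (ULift.{u} (Multiplicative ℤ))) :
    ∀ (G : Type u) [Group G], Group.FG G → Monoid.IsTorsionFree G → Group.IsNilpotent G → K G := by
  intro G _ hfg htf hnil
  exact K_nilpotent_aux hK hZ (Group.nilpotencyClass G) G hfg htf hnil le_rfl

end Nilpotent


/-- every root class `K` contains all finitely generated torsion-free
nilpotent groups, or there is a prime `p` such that `K` contains all finite `p`-groups. -/
theorem rootClass_contains_nilpotent_or_pGroups (K : GroupClass.{u}) (hK : IsRootClass K) :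
    (∀ (G : Type u) [Group G],
      Group.FG G → (∀ g : G, g ≠ 1 → ¬IsOfFinOrder g) → Group.IsNilpotent G → K G) ∨
    (∃ p : ℕ, p.Prime ∧ ∀ (G : Type u) [Group G], Finite G → IsPGroup p G → K G) := by
  obtain ⟨G0, _, hnt, hKG0⟩ := hK.2.1
  by_cases htor : ∃ g : G0, g ≠ 1 ∧ IsOfFinOrder g
  · right
    obtain ⟨g, hg1, hgf⟩ := htor
    set H : Subgroup G0 := Subgroup.zpowers g with hHdef
    have hHcard : Nat.card H = orderOf g := Nat.card_zpowers g
    have hm1 : orderOf g ≠ 1 := by simpa [orderOf_eq_one_iff] using hg1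
    have hm0 : orderOf g ≠ 0 := hgf.orderOf_pos.ne'
    haveI : Finite H := Nat.finite_of_card_ne_zero (by rw [hHcard]; exact hm0)
    set q := (orderOf g).minFac with hqdef
    have hq : q.Prime := Nat.minFac_prime hm1
    haveI : Fact q.Prime := ⟨hq⟩
    have hdvd : q ∣ Nat.card H := by rw [hHcard]; exact Nat.minFac_dvd _
    obtain ⟨x, hx⟩ := exists_prime_orderOf_dvd_card' (G := H) q hdvd
    refine ⟨q, hq, ?_⟩
    set C0 : Subgroup G0 := Subgroup.zpowers ((x : G0)) with hC0def
    have hC0card : Nat.card C0 = q := by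
      rw [hC0def, Nat.card_zpowers, Subgroup.orderOf_coe, hx]
    exact K_pGroups hK hq C0 hC0card (K_sub hK hKG0 C0)
  · left
    push_neg at htor
    obtain ⟨g, hg1⟩ := exists_ne (1 : G0)
    have hginf : ¬IsOfFinOrder g := htor g hg1
    have hinj : Function.Injective (zpowersHom G0 g) := by
      intro a b hab
      have h2 : (fun n : ℤ => g ^ n) a.toAdd = (fun n : ℤ => g ^ n) b.toAdd := hab
      have := injective_zpow_iff_not_isOfFinOrder.mpr hginf h2
      exact Multiplicative.toAdd.injective this
    have e : Multiplicative ℤ ≃* (zpowersHom G0 g).range := MonoidHom.ofInjective hinj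
    have hZ : K (ULift.{u} (Multiplicative ℤ)) := by
      have hKr : K ((zpowersHom G0 g).range) := K_sub hK hKG0 _
      exact K_iso hK ((MulEquiv.ulift.trans e).symm) hKr
    exact K_nilpotent hK hZ
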